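/- Ershov's recursion theorem with parameters: Let γ be a precomplete numbering of a set S and let h : ℕ × ℕ → ℕ be a total computable binary function. Then there exists a total computable function f : ℕ → ℕ such that for all n, f(n) ~γ h(f(n), n). -/

import Mathlib

/-- A numbering `γ : ℕ → S` (a surjection) is precomplete if every partial computable
function can be totalized modulo `~γ`. -/
def Precomplete {S : Type*} (γ : ℕ → S) : Prop :=
  ∀ ψ : ℕ →. ℕ, Nat.Partrec ψ →
    ∃ f : ℕ → ℕ, Computable f ∧ ∀ n : ℕ, ∀ y ∈ ψ n, γ (f n) = γ y

open Nat.Partrec Nat.Partrec.Code in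
/-- Ershov's recursion theorem with parameters. -/
theorem ershov_recursion_param {S : Type*} (γ : ℕ → S) (hsurj : Function.Surjective γ)
    (hpre : Precomplete γ) (h : ℕ → ℕ → ℕ) (hh : Computable₂ h) :
    ∃ f : ℕ → ℕ, Computable f ∧ ∀ n : ℕ, γ (f n) = γ (h (f n) n) := by
  -- the diagonal partial function ψ x = φ_x(x)
  obtain ⟨g, hg, hgspec⟩ := hpre (fun x => (Denumerable.ofNat Code x).eval x) (by
    have : Partrec fun x : ℕ => (Denumerable.ofNat Code x).eval x :=
      eval_part.comp (Computable.ofNat Code) Computable.id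
    exact Partrec.nat_iff.mp this)
  have hF : Nat.Partrec (fun m : ℕ => Part.some (h (g m.unpair.2) m.unpair.1)) := by
    have hcomp : Computable fun m : ℕ => h (g m.unpair.2) m.unpair.1 :=
      hh.comp (hg.comp (Computable.snd.comp Computable.unpair))
        (Computable.fst.comp Computable.unpair)
    exact Partrec.nat_iff.mp hcomp.partrec
  obtain ⟨c, hc⟩ := exists_code.mp hF
  refine ⟨fun n => g (Encodable.encode (c.curry n)), ?_, ?_⟩
  · exact hg.comp
      ((Primrec.encode.comp (primrec₂_curry.comp (Primrec.const c) Primrec.id)).to_comp)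
  · intro n
    apply hgspec
    simp [Denumerable.ofNat_encode, eval_curry, hc]
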